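/- Let (A, ⊕, ⊗, 0̄, 1̄) be a commutative semiring and let T be a finite rooted tree where each node u carries a finite multiset (list) of pairs: each pair consists of a value val ∈ A. Define for each element t at node u the aggregate agg(t) recursively: agg(t) = val(t) ⊗ ⨂_{c child of u} (⨁_{t' at c compatible with t} agg(t')). Then agg(t) equals ⨁ over all 'partial answers' p rooted at t (choices of one compatible element per node in the subtree of u, consistent along edges) of ⨂_{t' ∈ p} val(t'). (Distributivity of ⊗ over ⊕ implies the bottom-up message-passing computation is correct.) -/
import Mathlib


/-- correctness of bottom-up semiring aggregation on a rooted tree.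
The tree has node set `ι` with root `r` and parent function `parent`; node `u`
carries the tuples `tup u`; `subF u` is the subtree of `u`, `childs u` the children
of `u`, and `S u t` the finset of partial answers rooted at tuple `t` of node `u`
(one compatible tuple per subtree node, padded by `d` outside the subtree).
If `agg` satisfies the bottom-up message-passing recurrence, then `agg u t` equals
the semiring sum over all partial answers of the product of the values. -/
theorem semiring_aggregation_correct {A ι τ : Type*} [CommSemiring A]
    [Fintype ι] [DecidableEq ι] [DecidableEq τ]
    (r : ι) (parent : ι → ι) (hroot : parent r = r) (hreach : ∀ i, ∃ n, parent^[n] i = r)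
    (tup : ι → Finset τ) (val : τ → A) (compat : τ → τ → Prop)
    [∀ a b : τ, Decidable (compat a b)] (d : τ)
    (subF : ι → Finset ι) (hsubF : ∀ u i, i ∈ subF u ↔ ∃ n, parent^[n] i = u)
    (childs : ι → Finset ι) (hchilds : ∀ u i, i ∈ childs u ↔ (parent i = u ∧ i ≠ u))
    (S : ι → τ → Finset (ι → τ))
    (hS : ∀ u t (p : ι → τ), p ∈ S u t ↔
      (p u = t ∧ (∀ i ∈ subF u, p i ∈ tup i) ∧
       (∀ i ∈ subF u, i ≠ u → compat (p (parent i)) (p i)) ∧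
       (∀ i, i ∉ subF u → p i = d)))
    (agg : ι → τ → A)
    (hagg : ∀ u, ∀ t ∈ tup u, agg u t =
      val t * ∏ c ∈ childs u, ∑ t' ∈ (tup c).filter (fun t' => compat t t'), agg c t') :
    ∀ u, ∀ t ∈ tup u, agg u t = ∑ p ∈ S u t, ∏ i ∈ subF u, val (p i) := by
  classical
  -- basic structural facts
  have hrfix : ∀ k, parent^[k] r = r := by
    intro k; induction k with
    | zero => rfl
    | succ k ih => rw [Function.iterate_succ_apply, hroot, ih]
  have hcycle : ∀ i n, 0 < n → parent^[n] i = i → i = r := by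
    intro i n hn hcyc
    obtain ⟨m, hm⟩ := hreach i
    have hmul : ∀ k, parent^[k * n] i = i := by
      intro k
      induction k with
      | zero => simp
      | succ k ih => rw [Nat.succ_mul, Function.iterate_add_apply, hcyc] at *; exact ih
    have hge : m ≤ m * n := Nat.le_mul_of_pos_right m hn
    calc i = parent^[m * n] i := (hmul m).symm
      _ = parent^[(m * n - m) + m] i := by rw [Nat.sub_add_cancel hge]
      _ = parent^[m * n - m] (parent^[m] i) := Function.iterate_add_apply _ _ _ _
      _ = r := by rw [hm, hrfix]
  have antisym : ∀ i u, (∃ n, parent^[n] i = u) → (∃ m, parent^[m] u = i) → i = u := by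
    rintro i u ⟨n, hn⟩ ⟨m, hm⟩
    rcases Nat.eq_zero_or_pos (m + n) with h | h
    · obtain ⟨hm0, hn0⟩ := Nat.add_eq_zero.mp h
      subst hn0; simpa using hn
    · have : parent^[m + n] i = i := by rw [Function.iterate_add_apply, hn, hm]
      have hi : i = r := hcycle i _ h this
      rw [hi, hrfix n] at hn
      exact hi.trans hn
  have self_mem : ∀ u, u ∈ subF u := fun u => (hsubF u u).2 ⟨0, rfl⟩
  have child_sub : ∀ u c, c ∈ childs u → subF c ⊆ subF u := by
    intro u c hc i hi
    obtain ⟨n, hn⟩ := (hsubF c i).1 hi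
    exact (hsubF u i).2 ⟨n + 1, by rw [Function.iterate_succ_apply', hn, ((hchilds u c).1 hc).1]⟩
  have u_notin_child : ∀ u c, c ∈ childs u → u ∉ subF c := by
    intro u c hc hu
    obtain ⟨hpc, hne⟩ := (hchilds u c).1 hc
    exact hne (antisym c u ⟨1, hpc⟩ ((hsubF c u).1 hu))
  have parent_mem : ∀ c i, i ∈ subF c → i ≠ c → parent i ∈ subF c := by
    intro c i hi hne
    obtain ⟨n, hn⟩ := (hsubF c i).1 hi
    cases n with
    | zero => exact absurd hn hne
    | succ m => exact (hsubF c (parent i)).2 ⟨m, by rwa [Function.iterate_succ_apply] at hn⟩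
  have decomp : ∀ u i, i ∈ subF u ↔ i = u ∨ ∃ c ∈ childs u, i ∈ subF c := by
    intro u i
    constructor
    · intro hi
      obtain ⟨n, hn⟩ := (hsubF u i).1 hi
      clear hi
      induction n with
      | zero => exact Or.inl hn
      | succ m ih =>
        rw [Function.iterate_succ_apply'] at hn
        by_cases hcu : parent^[m] i = u
        · exact ih hcu
        · exact Or.inr ⟨parent^[m] i, (hchilds u _).2 ⟨hn, hcu⟩, (hsubF _ i).2 ⟨m, rfl⟩⟩
    · rintro (rfl | ⟨c, hc, hic⟩)
      · exact self_mem i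
      · exact child_sub u c hc hic
  have uniq_child : ∀ u i c₁ c₂, c₁ ∈ childs u → c₂ ∈ childs u →
      i ∈ subF c₁ → i ∈ subF c₂ → c₁ = c₂ := by
    have key : ∀ u i c₁ c₂, c₁ ∈ childs u → c₂ ∈ childs u →
        (∀ n m : ℕ, n ≤ m → parent^[n] i = c₁ → parent^[m] i = c₂ → c₁ = c₂) := by
      intro u i c₁ c₂ h1 h2 n m hle hn hm
      have : parent^[m - n] c₁ = c₂ := by
        rw [← hn, ← Function.iterate_add_apply, Nat.sub_add_cancel hle, hm]
      rcases Nat.eq_zero_or_pos (m - n) with h0 | hpos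
      · rwa [h0, Function.iterate_zero_apply] at this
      · exfalso
        obtain ⟨k, hk⟩ := Nat.exists_eq_add_of_lt hpos
        rw [hk] at this
        rw [Nat.zero_add, Function.iterate_succ_apply, ((hchilds u c₁).1 h1).1] at this
        have := antisym c₂ u ⟨1, ((hchilds u c₂).1 h2).1⟩ ⟨k, this⟩
        exact ((hchilds u c₂).1 h2).2 this
    intro u i c₁ c₂ h1 h2 hi1 hi2
    obtain ⟨n, hn⟩ := (hsubF c₁ i).1 hi1
    obtain ⟨m, hm⟩ := (hsubF c₂ i).1 hi2
    rcases le_total n m with h | h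
    · exact key u i c₁ c₂ h1 h2 n m h hn hm
    · exact (key u i c₂ c₁ h2 h1 m n h hm hn).symm
  have disj : ∀ u c₁ c₂, c₁ ∈ childs u → c₂ ∈ childs u → c₁ ≠ c₂ →
      Disjoint (subF c₁) (subF c₂) := by
    intro u c₁ c₂ h1 h2 hne
    rw [Finset.disjoint_left]
    intro i hi1 hi2
    exact hne (uniq_child u i c₁ c₂ h1 h2 hi1 hi2)
  have subF_eq : ∀ u, subF u = insert u ((childs u).biUnion subF) := by
    intro u; ext i
    simp only [Finset.mem_insert, Finset.mem_biUnion]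
    exact decomp u i
  have card_lt : ∀ u c, c ∈ childs u → (subF c).card < (subF u).card := by
    intro u c hc
    exact Finset.card_lt_card ⟨child_sub u c hc,
      fun hsub => u_notin_child u c hc (hsub (self_mem u))⟩
  have child_mem_sub : ∀ u c, c ∈ childs u → c ∈ subF u :=
    fun u c hc => child_sub u c hc (self_mem c)
  -- main induction on the size of the subtree
  suffices H : ∀ N u, (subF u).card ≤ N → ∀ t ∈ tup u, agg u t =
      ∑ p ∈ S u t, ∏ i ∈ subF u, val (p i) by
    intro u t ht; exact H _ u le_rfl t ht
  intro N
  induction N with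
  | zero =>
    intro u hcard
    exact absurd (Finset.card_pos.2 ⟨u, self_mem u⟩) (by omega)
  | succ N ih =>
    intro u hcard t ht
    set C := childs u with hC
    set Tc : ι → Finset (ι → τ) :=
      fun c => ((tup c).filter (fun t' => compat t t')).biUnion (S c) with hTc
    -- step 1: rewrite agg and apply IH
    have step1 : agg u t = val t * ∏ c ∈ C, ∑ q ∈ Tc c, ∏ i ∈ subF c, val (q i) := by
      rw [hagg u t ht]
      congr 1
      refine Finset.prod_congr rfl fun c hc => ?_
      have hcardc : (subF c).card ≤ N := by
        have := card_lt u c hc; omega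
      rw [Finset.sum_biUnion]
      · refine Finset.sum_congr rfl fun t' ht' => ?_
        exact ih c hcardc t' (Finset.mem_filter.1 ht').1
      · intro t₁ h₁ t₂ h₂ hne
        simp only [Function.onFun]
        rw [Finset.disjoint_left]
        intro q hq1 hq2
        exact hne (((hS c t₁ q).1 hq1).1 ▸ ((hS c t₂ q).1 hq2).1 ▸ rfl)
    rw [step1, Finset.prod_sum, Finset.mul_sum]
    -- the bijection
    set Φ : (∀ c ∈ C, ι → τ) → ι → τ := fun g i =>
      if h : ∃ c, ∃ hc : c ∈ C, i ∈ subF c then g h.choose h.choose_spec.1 i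
      else if i = u then t else d with hΦ
    have Φ_eq : ∀ g c (hc : c ∈ C) i, i ∈ subF c → Φ g i = g c hc i := by
      intro g c hc i hi
      have h : ∃ c, ∃ hc : c ∈ C, i ∈ subF c := ⟨c, hc, hi⟩
      simp only [hΦ, dif_pos h]
      have : h.choose = c := uniq_child u i _ c h.choose_spec.1 hc h.choose_spec.2 hi
      subst this; rfl
    have Φ_u : ∀ g, Φ g u = t := by
      intro g
      have h : ¬ ∃ c, ∃ hc : c ∈ C, u ∈ subF c := by
        rintro ⟨c, hc, hu⟩; exact u_notin_child u c hc hu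
      simp only [hΦ]
      rw [dif_neg h]; simp
    have Φ_out : ∀ g i, i ∉ subF u → Φ g i = d := by
      intro g i hi
      have h : ¬ ∃ c, ∃ hc : c ∈ C, i ∈ subF c := by
        rintro ⟨c, hc, hic⟩; exact hi (child_sub u c hc hic)
      have hne : i ≠ u := fun e => hi (e ▸ self_mem u)
      simp only [hΦ]
      rw [dif_neg h, if_neg hne]
    -- facts about members of Tc c
    have Tc_mem : ∀ c (hc : c ∈ C) q, q ∈ Tc c →
        (q c ∈ tup c ∧ compat t (q c) ∧ q ∈ S c (q c)) := by
      intro c hc q hq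
      obtain ⟨t', ht', hq'⟩ := Finset.mem_biUnion.1 hq
      obtain ⟨ht'1, ht'2⟩ := Finset.mem_filter.1 ht'
      have hqc : q c = t' := ((hS c t' q).1 hq').1
      exact ⟨hqc ▸ ht'1, hqc ▸ ht'2, hqc ▸ hq'⟩
    refine Finset.sum_bij' (fun g _ => Φ fun c hc => g c hc) (fun p _ => fun c _ i => if i ∈ subF c then p i else d) ?_ ?_ ?_ ?_ ?_
    · -- Φ g ∈ S u t
      intro g hg
      have hgmem : ∀ c (hc : c ∈ C), g c hc ∈ Tc c := fun c hc => Finset.mem_pi.1 hg c hc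
      beta_reduce
      rw [hS]
      refine ⟨Φ_u _, ?_, ?_, Φ_out _⟩
      · intro i hi
        rcases (decomp u i).1 hi with rfl | ⟨c, hc, hic⟩
        · rw [Φ_u]; exact ht
        · rw [Φ_eq _ c hc i hic]
          exact (((hS c _ _).1 (Tc_mem c hc _ (hgmem c hc)).2.2).2.1) i hic
      · intro i hi hne
        rcases (decomp u i).1 hi with rfl | ⟨c, hc, hic⟩
        · exact absurd rfl hne
        · obtain ⟨hqt, hcomp, hqS⟩ := Tc_mem c hc _ (hgmem c hc)
          by_cases hic' : i = c
          · subst hic'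
            rw [((hchilds u i).1 hc).1, Φ_u, Φ_eq _ i hc i (self_mem i)]
            exact hcomp
          · have hpi : parent i ∈ subF c := parent_mem c i hic hic'
            rw [Φ_eq _ c hc _ hpi, Φ_eq _ c hc i hic]
            exact ((hS c _ _).1 hqS).2.2.1 i hic hic'
    · -- restriction ∈ pi
      intro p hp
      obtain ⟨hpu, hptup, hpcomp, hpd⟩ := (hS u t p).1 hp
      beta_reduce
      rw [Finset.mem_pi]
      intro c hc
      have hcs : c ∈ subF u := child_mem_sub u c hc
      have hcne : c ≠ u := ((hchilds u c).1 hc).2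
      refine Finset.mem_biUnion.2 ⟨p c, Finset.mem_filter.2 ⟨hptup c hcs, ?_⟩, ?_⟩
      · have := hpcomp c hcs hcne
        rwa [((hchilds u c).1 hc).1, hpu] at this
      · rw [hS]
        refine ⟨by rw [if_pos (self_mem c)], ?_, ?_, fun i hi => if_neg hi⟩
        · intro i hi
          rw [if_pos hi]
          exact hptup i (child_sub u c hc hi)
        · intro i hi hne
          rw [if_pos hi, if_pos (parent_mem c i hi hne)]
          refine hpcomp i (child_sub u c hc hi) ?_
          exact fun e => u_notin_child u c hc (e ▸ hi)
    · -- left inverse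
      intro g hg
      have hgmem : ∀ c (hc : c ∈ C), g c hc ∈ Tc c := fun c hc => Finset.mem_pi.1 hg c hc
      beta_reduce
      funext c hc i
      by_cases hi : i ∈ subF c
      · rw [if_pos hi, Φ_eq _ c hc i hi]
      · rw [if_neg hi]
        exact (((hS c _ _).1 (Tc_mem c hc _ (hgmem c hc)).2.2).2.2.2 i hi).symm
    · -- right inverse
      intro p hp
      obtain ⟨hpu, hptup, hpcomp, hpd⟩ := (hS u t p).1 hp
      beta_reduce
      funext i
      by_cases hi : i ∈ subF u
      · rcases (decomp u i).1 hi with hiu | ⟨c, hc, hic⟩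
        · rw [hiu]
          exact (Φ_u (fun c hc i => if i ∈ subF c then p i else d)).trans hpu.symm
        · rw [Φ_eq (fun c hc i => if i ∈ subF c then p i else d) c hc i hic, if_pos hic]
      · rw [Φ_out (fun c hc i => if i ∈ subF c then p i else d) i hi, hpd i hi]
    · -- values agree
      intro g hg
      have hgmem : ∀ c (hc : c ∈ C), g c hc ∈ Tc c := fun c hc => Finset.mem_pi.1 hg c hc
      beta_reduce
      have hub : u ∉ C.biUnion subF := by
        rw [Finset.mem_biUnion]; rintro ⟨c, hc, hu⟩; exact u_notin_child u c hc hu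
      rw [eq_comm]
      calc ∏ i ∈ subF u, val (Φ (fun c hc => g c hc) i)
          = val t * ∏ i ∈ C.biUnion subF, val (Φ (fun c hc => g c hc) i) := by
            rw [subF_eq u, Finset.prod_insert hub, Φ_u]
        _ = val t * ∏ c ∈ C, ∏ i ∈ subF c, val (Φ (fun c hc => g c hc) i) := by
            rw [Finset.prod_biUnion]
            intro c₁ h₁ c₂ h₂ hne
            exact disj u c₁ c₂ h₁ h₂ hne
        _ = val t * ∏ c ∈ C.attach, ∏ i ∈ subF c.1, val (g c.1 c.2 i) := by
            rw [← Finset.prod_attach C (fun c => ∏ i ∈ subF c, val (Φ (fun c hc => g c hc) i))]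
            congr 1
            refine Finset.prod_congr rfl fun c _ => Finset.prod_congr rfl fun i hi => ?_
            rw [Φ_eq _ c.1 c.2 i hi]
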